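/- arXiv:1309.0603 — 2 statements merged into one kernel-verified Lean document; each statement's English description precedes it below -/
import Mathlib

section
/- If A = A1 ∪ A2 is a separable γ-set of a finite simple graph G, with A1, A2 nonempty disjoint sets such that A1 dominates V(G) − A, then A2 is a 2-packing of G, i.e., the closed neighborhoods of any two distinct vertices of A2 are disjoint. -/
open SimpleGraph

variable {V : Type*}

/-- `D` is a dominating set of `G`: every vertex is in `D` or adjacent to a vertex of `D`. -/
def IsDomSet (G : SimpleGraph V) (D : Set V) : Prop :=
  ∀ v : V, ∃ d ∈ D, d = v ∨ G.Adj d v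

/-- The domination number of `G`: minimum cardinality of a dominating set. -/
noncomputable def domNum (G : SimpleGraph V) : ℕ :=
  sInf {n | ∃ D : Set V, IsDomSet G D ∧ D.ncard = n}

/-- The prism `πG` of `G`: two disjoint copies of `G` together with the matching
`{u (π u) : u ∈ V(G)}`, the second copy playing the role of `G'`. -/
def prism (G : SimpleGraph V) (π : Equiv.Perm V) : SimpleGraph (V ⊕ V) where
  Adj a b :=
    match a, b with
    | Sum.inl u, Sum.inl v => G.Adj u v
    | Sum.inr u, Sum.inr v => G.Adj u v
    | Sum.inl u, Sum.inr v => π u = v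
    | Sum.inr u, Sum.inl v => π v = u
  symm := by
    constructor
    rintro (u | u) (v | v) h
    · exact G.symm.symm _ _ h
    · exact h
    · exact h
    · exact G.symm.symm _ _ h
  loopless := by
    constructor
    rintro (u | u) h
    · exact G.loopless.irrefl u h
    · exact G.loopless.irrefl u h

/-- The closed neighborhood `N[v]` of a vertex. -/
def closedNbhd (G : SimpleGraph V) (v : V) : Set V :=
  insert v (G.neighborSet v)

/-- `x` is a `C₃`-free vertex: non-isolated and belonging to no triangle of `G`. -/
def C3Free (G : SimpleGraph V) (x : V) : Prop :=
  (∃ y, G.Adj x y) ∧ ∀ u v : V, G.Adj x u → G.Adj x v → ¬ G.Adj u v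

/-- `A = A1 ∪ A2` is a separable γ-set of `G` (an `A1`-γ-set): `A1, A2` are nonempty,
disjoint, `A` is a γ-set, and `A1` dominates `V(G) - A`. -/
def SepGammaSet (G : SimpleGraph V) (A1 A2 : Set V) : Prop :=
  A1.Nonempty ∧ A2.Nonempty ∧ Disjoint A1 A2 ∧
  IsDomSet G (A1 ∪ A2) ∧ (A1 ∪ A2).ncard = domNum G ∧
  ∀ v ∉ A1 ∪ A2, ∃ u ∈ A1, G.Adj u v

/-- The separable γ-set `A = A1 ∪ A2` is effective under `π`: `π(A)` is a γ-set of the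
copy `G'` of `G` (identified with `G`) whose dominating part is `B2' = π(A2)`,
i.e. `π(A2)` dominates `V(G') - π(A)`. -/
def Effective (G : SimpleGraph V) (π : Equiv.Perm V) (A1 A2 : Set V) : Prop :=
  IsDomSet G (⇑π '' (A1 ∪ A2)) ∧ (⇑π '' (A1 ∪ A2)).ncard = domNum G ∧
  ∀ v ∉ ⇑π '' (A1 ∪ A2), ∃ u ∈ ⇑π '' A2, G.Adj u v

/-- The star `K_{1,m}` on `Fin (m+1)`, with center `0` adjacent to the `m` leaves. -/
def starGraph (m : ℕ) : SimpleGraph (Fin (m + 1)) where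
  Adj a b := (a = 0 ∧ b ≠ 0) ∨ (b = 0 ∧ a ≠ 0)
  symm := ⟨fun a b h => Or.symm h⟩
  loopless := ⟨fun a h => by rcases h with ⟨h1, h2⟩ | ⟨h1, h2⟩ <;> exact h2 h1⟩

/-- in a separable γ-set `A = A1 ∪ A2`, the set `A2` is a 2-packing of `G`. -/
theorem sep_gamma_set_A2_packing [Fintype V] (G : SimpleGraph V) (A1 A2 : Set V)
    (h : SepGammaSet G A1 A2) :
    ∀ u ∈ A2, ∀ v ∈ A2, u ≠ v → closedNbhd G u ∩ closedNbhd G v = ∅ := by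
  intro u hu v hv huv
  by_contra hne
  obtain ⟨w, hwu, hwv⟩ := Set.nonempty_iff_ne_empty.mpr hne
  obtain ⟨hA1ne, hA2ne, hdisj, hdom, hcard, hsep⟩ := h
  set A : Set V := A1 ∪ A2 with hA
  set D : Set V := insert w (A \ {u, v}) with hD
  have hwu' : w = u ∨ G.Adj w u := by
    rcases hwu with h1 | h1
    · exact Or.inl h1
    · exact Or.inr (G.adj_symm h1)
  have hwv' : w = v ∨ G.Adj w v := by
    rcases hwv with h1 | h1
    · exact Or.inl h1
    · exact Or.inr (G.adj_symm h1)
  have hdomD : IsDomSet G D := by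
    intro x
    by_cases hx : x ∈ A
    · by_cases hxuv : x = u ∨ x = v
      · refine ⟨w, Set.mem_insert _ _, ?_⟩
        rcases hxuv with rfl | rfl
        · exact hwu'
        · exact hwv'
      · exact ⟨x, Set.mem_insert_of_mem _ ⟨hx, by simpa using hxuv⟩, Or.inl rfl⟩
    · obtain ⟨d, hd, hadj⟩ := hsep x hx
      have hdD : d ∈ D := by
        refine Set.mem_insert_of_mem _ ⟨Or.inl hd, ?_⟩
        rintro (rfl | rfl)
        · exact (hdisj.ne_of_mem hd hu) rfl
        · exact (hdisj.ne_of_mem hd hv) rfl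
      exact ⟨d, hdD, Or.inr hadj⟩
  have hAfin : A.Finite := Set.toFinite A
  have huvA : ({u, v} : Set V) ⊆ A := by
    rintro x (rfl | rfl)
    · exact Or.inr hu
    · exact Or.inr hv
  have huvcard : ({u, v} : Set V).ncard = 2 := by
    rw [Set.ncard_pair huv]
  have h2le : 2 ≤ A.ncard := by
    calc 2 = ({u, v} : Set V).ncard := huvcard.symm
    _ ≤ A.ncard := Set.ncard_le_ncard huvA hAfin
  have hdiff : (A \ {u, v}).ncard = A.ncard - 2 := by
    rw [Set.ncard_diff huvA, huvcard]
  have hcardD : D.ncard < A.ncard := by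
    have := Set.ncard_insert_le w (A \ {u, v})
    rw [hD]
    rw [hdiff] at this
    omega
  have hle : domNum G ≤ D.ncard := Nat.sInf_le ⟨D, hdomD, rfl⟩
  rw [hcard] at hcardD
  omega
end

section
/- If G is a finite simple bipartite graph with at least one edge, then G is not a universal fixer; that is, there exists a permutation π of V(G) with γ(πG) > γ(G). -/
open SimpleGraph

variable {V : Type*}

section AuxProof

open Classical in
/-- Every graph on a finite vertex type has the universal set as dominating set. -/
lemma isDomSet_univ' [Fintype V] (G : SimpleGraph V) : IsDomSet G Set.univ :=
  fun v => ⟨v, Set.mem_univ v, Or.inl rfl⟩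

lemma domNum_le_ncard [Fintype V] {G : SimpleGraph V} {D : Set V} (h : IsDomSet G D) :
    domNum G ≤ D.ncard :=
  Nat.sInf_le ⟨D, h, rfl⟩

lemma exists_gammaSet [Fintype V] (G : SimpleGraph V) :
    ∃ D : Set V, IsDomSet G D ∧ D.ncard = domNum G :=
  Nat.sInf_mem (⟨_, Set.univ, isDomSet_univ' G, rfl⟩ :
    {n | ∃ D : Set V, IsDomSet G D ∧ D.ncard = n}.Nonempty)

lemma prism_adj_inl_inl {G : SimpleGraph V} {π : Equiv.Perm V} {u v : V} :
    (prism G π).Adj (Sum.inl u) (Sum.inl v) ↔ G.Adj u v := Iff.rfl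

lemma prism_adj_inl_inr {G : SimpleGraph V} {π : Equiv.Perm V} {u v : V} :
    (prism G π).Adj (Sum.inl u) (Sum.inr v) ↔ π u = v := Iff.rfl

lemma prism_adj_inr_inl {G : SimpleGraph V} {π : Equiv.Perm V} {u v : V} :
    (prism G π).Adj (Sum.inr u) (Sum.inl v) ↔ π v = u := Iff.rfl

lemma prism_adj_inr_inr {G : SimpleGraph V} {π : Equiv.Perm V} {u v : V} :
    (prism G π).Adj (Sum.inr u) (Sum.inr v) ↔ G.Adj u v := Iff.rfl

end AuxProof

/-- a bipartite graph with at least one edge is not a universal fixer. -/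
theorem not_universal_fixer_of_bipartite [Fintype V] (G : SimpleGraph V)
    (hedge : ∃ u v : V, G.Adj u v)
    (hbip : ∃ s : Set V, ∀ u v : V, G.Adj u v → (u ∈ s ↔ v ∉ s)) :
    ∃ π : Equiv.Perm V, domNum G < domNum (prism G π) := by
  classical
  obtain ⟨x, y0, hxy0⟩ := hedge
  obtain ⟨s, hs⟩ := hbip
  -- the neighborhood of x is independent (bipartite graphs are triangle-free)
  have hind : ∀ a b : V, G.Adj x a → G.Adj x b → ¬ G.Adj a b := by
    intro a b ha hb hab
    have h1 := hs x a ha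
    have h2 := hs x b hb
    have h3 := hs a b hab
    tauto
  -- the closed neighborhood of x, as a set and as a list
  set S : Set V := {z | z = x ∨ G.Adj x z} with hS_def
  have xS : x ∈ S := Or.inl rfl
  set l : List V := ((G.neighborSet x).toFinite.toFinset).toList with hl_def
  have hmem_l : ∀ z, z ∈ l ↔ G.Adj x z := by
    intro z
    simp [hl_def, Finset.mem_toList, Set.Finite.mem_toFinset, mem_neighborSet]
  set L : List V := x :: l with hL_def
  have hmemL : ∀ z, z ∈ L ↔ z ∈ S := by
    intro z
    simp [hL_def, hS_def, hmem_l]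
  have hnodup : L.Nodup := by
    rw [hL_def, List.nodup_cons]
    exact ⟨fun h => G.loopless.irrefl x ((hmem_l x).1 h), Finset.nodup_toList _⟩
  have hlne : l ≠ [] := by
    intro h
    have := (hmem_l y0).2 hxy0
    rw [h] at this
    exact List.not_mem_nil this
  have hLlen : ∀ a : V, L ≠ [a] := by
    intro a h
    rw [hL_def] at h
    injection h with h1 h2
    exact hlne h2
  set π : Equiv.Perm V := L.formPerm with hπ_def
  -- basic facts about π
  have hfix : ∀ z, z ∉ S → π z = z := by
    intro z hz
    exact List.formPerm_apply_of_notMem (fun h => hz ((hmemL z).1 h))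
  have hmapsto : ∀ z ∈ S, π z ∈ S := by
    intro z hz
    exact (hmemL _).1 (List.formPerm_apply_mem_of_mem ((hmemL z).2 hz))
  have hne0 : ∀ z ∈ S, π z ≠ z := by
    intro z hz
    have hzsup : z ∈ π.support := by
      rw [hπ_def, List.support_formPerm_of_nodup L hnodup hLlen, List.mem_toFinset]
      exact (hmemL z).2 hz
    exact Equiv.Perm.mem_support.1 hzsup
  have hadj_of_mem : ∀ z ∈ S, z ≠ x → G.Adj x z := by
    intro z hz hzx
    rcases hz with h | h
    · exact absurd h hzx
    · exact h
  -- w : the preimage of x under π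
  have hxw : ∃ w ∈ S, π w = x := by
    have hSim : ⇑π '' S = S := by
      apply Set.eq_of_subset_of_ncard_le
      · rintro _ ⟨z, hz, rfl⟩
        exact hmapsto z hz
      · rw [Set.ncard_image_of_injective S π.injective]
      · exact S.toFinite
    have : x ∈ ⇑π '' S := by rw [hSim]; exact xS
    obtain ⟨w, hw1, hw2⟩ := this
    exact ⟨w, hw1, hw2⟩
  obtain ⟨w, hwS, hw⟩ := hxw
  have hwx : w ≠ x := by
    intro h
    rw [h] at hw
    exact hne0 x xS hw
  have hxwadj : G.Adj x w := hadj_of_mem w hwS hwx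
  -- k and its upper bound
  set k : ℕ := domNum G with hk_def
  have hk_lt : k < Fintype.card V := by
    have hDdom : IsDomSet G {x}ᶜ := by
      intro v
      by_cases hv : v = x
      · exact ⟨y0, by simp [(G.ne_of_adj hxy0).symm], Or.inr (by rw [hv]; exact G.adj_symm hxy0)⟩
      · exact ⟨v, by simp [hv], Or.inl rfl⟩
    have h1 : k ≤ ({x}ᶜ : Set V).ncard := domNum_le_ncard hDdom
    have h2 : ({x}ᶜ : Set V).ncard = Fintype.card V - 1 := by
      rw [Set.compl_eq_univ_diff, Set.ncard_diff_singleton_of_mem (Set.mem_univ x),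
        Set.ncard_univ, Nat.card_eq_fintype_card]
    have h3 : 0 < Fintype.card V := Fintype.card_pos_iff.2 ⟨x⟩
    omega
  refine ⟨π, ?_⟩
  -- Part 1 : k ≤ domNum (prism G π)
  have hge : k ≤ domNum (prism G π) := by
    obtain ⟨E0, hE0dom, hE0card⟩ := exists_gammaSet (prism G π)
    set proj : V ⊕ V → V := Sum.elim id (⇑π.symm) with hproj_def
    have hMdom : IsDomSet G (proj '' E0) := by
      intro v
      obtain ⟨d, hd, hor⟩ := hE0dom (Sum.inl v)
      cases d with
      | inl u =>
        rcases hor with h | h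
        · exact ⟨u, ⟨Sum.inl u, hd, rfl⟩, Or.inl (Sum.inl.inj h)⟩
        · exact ⟨u, ⟨Sum.inl u, hd, rfl⟩, Or.inr (prism_adj_inl_inl.1 h)⟩
      | inr u =>
        rcases hor with h | h
        · exact absurd h (by simp)
        · have hπ : π v = u := prism_adj_inr_inl.1 h
          refine ⟨v, ⟨Sum.inr u, hd, ?_⟩, Or.inl rfl⟩
          simp [hproj_def, ← hπ]
    calc k ≤ (proj '' E0).ncard := domNum_le_ncard hMdom
    _ ≤ E0.ncard := Set.ncard_image_le E0.toFinite
    _ = domNum (prism G π) := hE0card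
  -- Part 2 : domNum (prism G π) ≠ k
  have hne2 : domNum (prism G π) ≠ k := by
    intro heq
    obtain ⟨E, hEdom, hEcard⟩ := exists_gammaSet (prism G π)
    rw [heq] at hEcard
    set X : Set V := Sum.inl ⁻¹' E with hX_def
    set Y : Set V := Sum.inr ⁻¹' E with hY_def
    have hEeq : E = Sum.inl '' X ∪ Sum.inr '' Y := by
      ext d
      cases d with
      | inl u => simp [hX_def]
      | inr u => simp [hY_def]
    have hcardXY : X.ncard + Y.ncard = k := by
      rw [← hEcard, hEeq, Set.ncard_union_eq (by
          rw [Set.disjoint_left]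
          rintro _ ⟨u, _, rfl⟩ ⟨v, _, h⟩
          exact Sum.inr_ne_inl h) (Set.toFinite _) (Set.toFinite _),
        Set.ncard_image_of_injective X Sum.inl_injective,
        Set.ncard_image_of_injective Y Sum.inr_injective]
    set A1 : Set V := X with hA1_def
    set A2 : Set V := ⇑π ⁻¹' Y with hA2_def
    have hA2card : A2.ncard = Y.ncard := by
      rw [hA2_def]
      exact Set.ncard_preimage_of_injective_subset_range π.injective
        (by rw [Equiv.range_eq_univ]; exact Set.subset_univ Y)
    have himg2 : ⇑π '' A2 = Y := Set.image_preimage_eq Y π.surjective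
    -- left-copy domination condition
    have P1 : ∀ v, v ∉ A2 → v ∈ A1 ∨ ∃ a ∈ A1, G.Adj a v := by
      intro v hv
      obtain ⟨d, hd, hor⟩ := hEdom (Sum.inl v)
      cases d with
      | inl u =>
        rcases hor with h | h
        · exact Or.inl (by rw [← Sum.inl.inj h]; exact hd)
        · exact Or.inr ⟨u, hd, prism_adj_inl_inl.1 h⟩
      | inr u =>
        rcases hor with h | h
        · exact absurd h (by simp)
        · exact absurd (prism_adj_inr_inl.1 h ▸ hd : π v ∈ Y) hv
    -- right-copy domination condition
    have P2 : ∀ v, v ∉ ⇑π '' A1 → v ∈ Y ∨ ∃ b ∈ Y, G.Adj b v := by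
      intro v hv
      obtain ⟨d, hd, hor⟩ := hEdom (Sum.inr v)
      cases d with
      | inl u =>
        rcases hor with h | h
        · exact absurd h (by simp)
        · exact absurd ⟨u, hd, prism_adj_inl_inr.1 h⟩ hv
      | inr u =>
        rcases hor with h | h
        · exact Or.inl (by rw [← Sum.inr.inj h]; exact hd)
        · exact Or.inr ⟨u, hd, prism_adj_inr_inr.1 h⟩
    -- the projected pair
    set A : Set V := A1 ∪ A2 with hA_def
    have hAdom : IsDomSet G A := by
      intro v
      by_cases hv : v ∈ A2
      · exact ⟨v, Or.inr hv, Or.inl rfl⟩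
      · rcases P1 v hv with h | ⟨a, ha, hav⟩
        · exact ⟨v, Or.inl h, Or.inl rfl⟩
        · exact ⟨a, Or.inl ha, Or.inr hav⟩
    have hAcard : A.ncard = k := by
      have h1 : k ≤ A.ncard := domNum_le_ncard hAdom
      have h2 : A.ncard ≤ A1.ncard + A2.ncard := Set.ncard_union_le A1 A2
      rw [hA2card] at h2
      omega
    have hdisjoint : Disjoint A1 A2 := by
      have h := Set.ncard_union_add_ncard_inter A1 A2 (Set.toFinite _) (Set.toFinite _)
      rw [← hA_def, hAcard, hA2card, hcardXY] at h
      have : (A1 ∩ A2).ncard = 0 := by omega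
      rw [Set.ncard_eq_zero (Set.toFinite _)] at this
      exact Set.disjoint_iff_inter_eq_empty.2 this
    -- the image γ-set
    set B : Set V := ⇑π '' A with hB_def
    have hBeq : B = ⇑π '' A1 ∪ Y := by
      rw [hB_def, hA_def, Set.image_union, himg2]
    have hB1sub : ⇑π '' A1 ⊆ B := by rw [hBeq]; exact Set.subset_union_left
    have hYsub : Y ⊆ B := by rw [hBeq]; exact Set.subset_union_right
    have hBcard : B.ncard = k := by
      rw [hB_def, Set.ncard_image_of_injective A π.injective, hAcard]
    have hdisjB : Disjoint (⇑π '' A1) (⇑π '' A2) :=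
      (Set.disjoint_image_iff π.injective).2 hdisjoint
    -- nonemptiness
    have hA1ne : A1.Nonempty := by
      by_contra h
      rw [Set.not_nonempty_iff_eq_empty] at h
      have : ∀ v, v ∈ A2 := by
        intro v
        by_contra hv
        rcases P1 v hv with h2 | ⟨a, ha, _⟩
        · rw [h] at h2; exact h2
        · rw [h] at ha; exact ha
      have hA2univ : A2 = Set.univ := Set.eq_univ_of_forall this
      have : A.ncard = Fintype.card V := by
        rw [hA_def, h, Set.empty_union, hA2univ, Set.ncard_univ, Nat.card_eq_fintype_card]
      omega
    have hA2ne : A2.Nonempty := by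
      by_contra h
      rw [Set.not_nonempty_iff_eq_empty] at h
      have hY : Y = ∅ := by rw [← himg2, h, Set.image_empty]
      have : ∀ v, v ∈ ⇑π '' A1 := by
        intro v
        by_contra hv
        rcases P2 v hv with h2 | ⟨b, hb, _⟩
        · rw [hY] at h2; exact h2
        · rw [hY] at hb; exact hb
      have hA1univ : ⇑π '' A1 = Set.univ := Set.eq_univ_of_forall this
      have hA1c : A1.ncard = Fintype.card V := by
        rw [← Set.ncard_image_of_injective A1 π.injective, hA1univ, Set.ncard_univ,
          Nat.card_eq_fintype_card]
      have : A1.ncard + A2.ncard = k := by rw [hA2card, hcardXY]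
      omega
    have hk_pos : 0 < k := by
      rw [← hAcard]
      rw [Set.ncard_pos (Set.toFinite _)]
      exact hA1ne.mono Set.subset_union_left
    -- L1 : no vertex of A2 has a neighbour in A
    have L1 : ∀ a ∈ A2, ∀ c ∈ A, G.Adj c a → False := by
      intro a ha c hc hadj
      have hDdom : IsDomSet G (A \ {a}) := by
        intro v
        by_cases hva : v = a
        · exact ⟨c, ⟨hc, by simp [G.ne_of_adj hadj]⟩, Or.inr (by rw [hva]; exact hadj)⟩
        · by_cases hvA : v ∈ A
          · exact ⟨v, ⟨hvA, by simp [hva]⟩, Or.inl rfl⟩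
          · have hv2 : v ∉ A2 := fun h => hvA (Or.inr h)
            rcases P1 v hv2 with h | ⟨d, hd, hdv⟩
            · exact absurd (Or.inl h : v ∈ A) hvA
            · refine ⟨d, ⟨Or.inl hd, ?_⟩, Or.inr hdv⟩
              simp only [Set.mem_singleton_iff]
              intro hda
              rw [hda] at hd
              exact Set.disjoint_left.1 hdisjoint hd ha
      have haA : a ∈ A := Set.mem_union_right A1 ha
      have h1 : k ≤ (A \ {a}).ncard := domNum_le_ncard hDdom
      rw [Set.ncard_diff_singleton_of_mem haA, hAcard] at h1
      omega
    -- L2 : no vertex of π '' A1 has a neighbour in B = π '' A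
    have L2 : ∀ b ∈ ⇑π '' A1, ∀ c ∈ B, G.Adj c b → False := by
      intro b hb c hc hadj
      have hBdom' : IsDomSet G (B \ {b}) := by
        intro v
        by_cases hvb : v = b
        · exact ⟨c, ⟨hc, by simp [G.ne_of_adj hadj]⟩, Or.inr (by rw [hvb]; exact hadj)⟩
        · by_cases hvB : v ∈ B
          · exact ⟨v, ⟨hvB, by simp [hvb]⟩, Or.inl rfl⟩
          · have hv1 : v ∉ ⇑π '' A1 := fun h => hvB (hB1sub h)
            rcases P2 v hv1 with h | ⟨d, hd, hdv⟩
            · exact absurd (hYsub h) hvB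
            · refine ⟨d, ⟨hYsub hd, ?_⟩, Or.inr hdv⟩
              simp only [Set.mem_singleton_iff]
              intro hdb
              rw [hdb] at hd
              rw [← himg2] at hd
              exact Set.disjoint_left.1 hdisjB hb hd
      have h1 : k ≤ (B \ {b}).ncard := domNum_le_ncard hBdom'
      rw [Set.ncard_diff_singleton_of_mem (hB1sub hb), hBcard] at h1
      omega
    -- M1 : descent lemma
    have M1 : x ∉ A1 → ∀ z, G.Adj x z → z ∉ A → z ∉ B := by
      intro hx z hz hzA hzB
      have hz2 : z ∉ A2 := fun h => hzA (Set.mem_union_right A1 h)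
      rcases P1 z hz2 with h | ⟨a, ha, haz⟩
      · exact hzA (Set.mem_union_left A2 h)
      · have hax : a ≠ x := fun h => hx (h ▸ ha)
        have haS : a ∉ S := by
          intro haS
          rcases haS with h | h
          · exact hax h
          · exact hind a z h hz haz
        have haB : a ∈ ⇑π '' A1 := ⟨a, ha, hfix a haS⟩
        exact L2 a haB z hzB (G.adj_symm haz)
    -- final case analysis
    by_cases hx1 : x ∈ A1
    · -- Case 1 : x ∈ A1
      have hA2S : ∀ b ∈ A2, b ∉ S := by
        intro b hb hbS
        rcases hbS with h | h
        · exact Set.disjoint_left.1 hdisjoint hx1 (h ▸ hb)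
        · exact L1 b hb x (Set.mem_union_left A2 hx1) h
      have hxB1 : x ∈ ⇑π '' A1 := by
        by_contra hc
        rcases P2 x hc with h | ⟨b, hb, hbx⟩
        · rw [← himg2] at h
          obtain ⟨u, hu, hπu⟩ := h
          have huS : u ∉ S := hA2S u hu
          rw [hfix u huS] at hπu
          exact huS (hπu ▸ xS)
        · rw [← himg2] at hb
          obtain ⟨u, hu, hπu⟩ := hb
          have huS : u ∉ S := hA2S u hu
          rw [hfix u huS] at hπu
          exact huS (hπu ▸ (Or.inr (G.adj_symm hbx) : b ∈ S))
      have hπxS : π x ∈ S := hmapsto x xS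
      have hπxB : π x ∈ B := hB1sub ⟨x, hx1, rfl⟩
      exact L2 x hxB1 (π x) hπxB (G.adj_symm (hadj_of_mem (π x) hπxS (hne0 x xS)))
    · by_cases hx2 : x ∈ A2
      · -- Case 2 : x ∈ A2
        have hπxS : π x ∈ S := hmapsto x xS
        have hxz : G.Adj x (π x) := hadj_of_mem (π x) hπxS (hne0 x xS)
        have hzA : π x ∉ A := by
          intro h
          exact L1 x hx2 (π x) h (G.adj_symm hxz)
        have hz2 : π x ∉ A2 := fun h => hzA (Set.mem_union_right A1 h)
        rcases P1 (π x) hz2 with h | ⟨a, ha, haz⟩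
        · exact hzA (Set.mem_union_left A2 h)
        · have hax : a ≠ x := fun h => hx1 (h ▸ ha)
          have haS : a ∉ S := by
            intro haS
            rcases haS with h | h
            · exact hax h
            · exact hind a (π x) h hxz haz
          have haB1 : a ∈ ⇑π '' A1 := ⟨a, ha, hfix a haS⟩
          have hzB : π x ∈ B := ⟨x, Set.mem_union_right A1 hx2, rfl⟩
          exact L2 a haB1 (π x) hzB (G.adj_symm haz)
      · -- Case 3 : x ∉ A
        have hxA : x ∉ A := by
          intro h
          rcases h with h | h
          · exact hx1 h
          · exact hx2 h
        obtain ⟨u, hu1, hux⟩ : ∃ a ∈ A1, G.Adj a x := (P1 x hx2).resolve_left hx1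
        by_cases hw1 : w ∈ A1
        · -- Case 3a : w ∈ A1
          have hxB1 : x ∈ ⇑π '' A1 := ⟨w, hw1, hw⟩
          have hNxB : ∀ c ∈ B, ¬ G.Adj c x := fun c hc h => L2 x hxB1 c hc h
          have hAS : ∀ c ∈ S, c ∈ A → c = w := by
            intro c hcS hcA
            by_contra hcw
            have hπc : π c ∈ B := ⟨c, hcA, rfl⟩
            have hπcS : π c ∈ S := hmapsto c hcS
            have hπcx : π c ≠ x := fun h => hcw (π.injective (h.trans hw.symm))
            exact hNxB (π c) hπc (G.adj_symm (hadj_of_mem (π c) hπcS hπcx))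
          have hwpre : ∀ u' ∈ A, π u' ≠ w := by
            intro u' hu' hπu'
            have hu'S : u' ∈ S := by
              by_contra hc
              rw [hfix u' hc] at hπu'
              exact hc (hπu' ▸ hwS)
            have := hAS u' hu'S hu'
            rw [this] at hπu'
            exact hne0 w hwS hπu'
          have hw1' : w ∉ ⇑π '' A1 := by
            rintro ⟨u', hu', hπu'⟩
            exact hwpre u' (Set.mem_union_left A2 hu') hπu'
          rcases P2 w hw1' with h | ⟨b, hb, hbw⟩
          · rw [← himg2] at h
            obtain ⟨u', hu', hπu'⟩ := h
            exact hwpre u' (Set.mem_union_right A1 hu') hπu'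
          · rw [← himg2] at hb
            obtain ⟨u', hu', hπu'⟩ := hb
            have hu'S : u' ∉ S := by
              intro hus
              have := hAS u' hus (Set.mem_union_right A1 hu')
              rw [this] at hu'
              exact Set.disjoint_left.1 hdisjoint hw1 hu'
            have hbu : b = u' := by rw [← hπu', hfix u' hu'S]
            rw [hbu] at hbw
            exact L1 u' hu' w (Set.mem_union_left A2 hw1) (G.adj_symm hbw)
        · by_cases hw2 : w ∈ A2
          · -- Case 3b : w ∈ A2
            have huS : u ∈ S := Or.inr (G.adj_symm hux)
            have huw : u ≠ w := fun h => hw1 (h ▸ hu1)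
            have hπuS : π u ∈ S := hmapsto u huS
            have hπux : π u ≠ x := fun h => huw (π.injective (h.trans hw.symm))
            have hadjx : G.Adj x (π u) := hadj_of_mem (π u) hπuS hπux
            have hπuB1 : π u ∈ ⇑π '' A1 := ⟨u, hu1, rfl⟩
            have hxB : x ∈ B := ⟨w, Set.mem_union_right A1 hw2, hw⟩
            exact L2 (π u) hπuB1 x hxB hadjx
          · -- Case 3c : w ∉ A; descend around the cycle
            have hwA : w ∉ A := by
              intro h
              rcases h with h | h
              · exact hw1 h
              · exact hw2 h
            have chain : ∀ i : ℕ, ∀ z, z ∈ S → z ∈ A → (π ^ i) z = x → False := by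
              intro i
              induction i with
              | zero =>
                intro z _ hzA hzpow
                simp only [pow_zero, Equiv.Perm.coe_one, id_eq] at hzpow
                exact hxA (hzpow ▸ hzA)
              | succ i ih =>
                intro z hzS hzA hzpow
                by_cases hπzx : π z = x
                · have hzw : z = w := π.injective (hπzx.trans hw.symm)
                  exact hwA (hzw ▸ hzA)
                · have hπzS : π z ∈ S := hmapsto z hzS
                  have hπzadj : G.Adj x (π z) := hadj_of_mem (π z) hπzS hπzx
                  have hπzA : π z ∈ A := by
                    by_contra hc
                    exact M1 hx1 (π z) hπzadj hc ⟨z, hzA, rfl⟩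
                  apply ih (π z) hπzS hπzA
                  rw [← Equiv.Perm.mul_apply, ← pow_succ]
                  exact hzpow
            have hcyc : π.IsCycleOn {a : V | a ∈ L} := hnodup.isCycleOn_formPerm
            have hLS : {a : V | a ∈ L} = S := Set.ext hmemL
            rw [hLS] at hcyc
            have huS : u ∈ S := Or.inr (G.adj_symm hux)
            obtain ⟨n, hn⟩ := hcyc.exists_pow_eq' S.toFinite huS xS
            exact chain n u huS (Set.mem_union_left A2 hu1) hn
  exact lt_of_le_of_ne hge (Ne.symm hne2)
end
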